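/- Target Score Identity (additive noise): for every y ∈ ℝ^d, the gradient of log p_Y satisfies ∇ log p_Y(y) = ∫ ∇ log p_X(x) · p_{X|Y}(x|y) dx, where the integral is over ℝ^d. -/

import Mathlib

open MeasureTheory Real ENNReal

set_option maxHeartbeats 1000000

namespace TargetScoreAux

variable {d : ℕ}

local notation "𝔈" => EuclideanSpace ℝ (Fin d)

lemma grad_continuous (f : 𝔈 → ℝ) (hf : ContDiff ℝ 1 f) : Continuous (gradient f) := by
  unfold gradient
  exact (InnerProductSpace.toDual ℝ 𝔈).symm.continuous.comp (hf.continuous_fderiv one_ne_zero)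

lemma integrable_of_integral_one (f : 𝔈 → ℝ) (h : ∫ x, f x = 1) : Integrable f := by
  by_contra hn
  rw [integral_undef hn] at h; norm_num at h

lemma ftc_line (f : 𝔈 → ℝ) (hf : ContDiff ℝ 1 f) (x v : 𝔈) :
    f (x + v) - f x = ∫ t in (0:ℝ)..1, (inner ℝ (gradient f (x + t • v)) v : ℝ) := by
  have hd : ∀ t : ℝ, HasDerivAt (fun s : ℝ => f (x + s • v))
      (inner ℝ (gradient f (x + t • v)) v : ℝ) t := by
    intro t
    have h1 : HasFDerivAt f (InnerProductSpace.toDual ℝ 𝔈 (gradient f (x + t • v))) (x + t • v) :=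
      ((hf.differentiable one_ne_zero) (x + t • v)).hasGradientAt
    have h2 : HasDerivAt (fun s : ℝ => x + s • v) v t := by
      simpa using ((hasDerivAt_id t).smul_const v).const_add x
    exact h1.comp_hasDerivAt t h2
  have := intervalIntegral.integral_eq_sub_of_hasDerivAt (f := fun s : ℝ => f (x + s • v))
    (a := (0:ℝ)) (b := 1) (fun t _ => hd t) ?_
  · simpa using this.symm
  · apply Continuous.intervalIntegrable
    exact ((grad_continuous f hf).comp (by continuity)).inner continuous_const

lemma line_bound (f : 𝔈 → ℝ) (hf : ContDiff ℝ 1 f) (x v : 𝔈) :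
    f (x + v) ≤ f x + ‖v‖ * ∫ t in (0:ℝ)..1, ‖gradient f (x + t • v)‖ := by
  have h1 := ftc_line f hf x v
  have hgc : Continuous fun t : ℝ => gradient f (x + t • v) :=
    (grad_continuous f hf).comp (by continuity)
  have h2 : ∫ t in (0:ℝ)..1, (inner ℝ (gradient f (x + t • v)) v : ℝ)
      ≤ ∫ t in (0:ℝ)..1, ‖gradient f (x + t • v)‖ * ‖v‖ := by
    apply intervalIntegral.integral_mono_on zero_le_one
    · exact (hgc.inner continuous_const).intervalIntegrable _ _
    · exact (hgc.norm.mul continuous_const).intervalIntegrable _ _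
    · intro t _
      exact real_inner_le_norm _ _
  rw [intervalIntegral.integral_mul_const] at h2
  nlinarith [h1, h2]

lemma conv_integrable (pX pW : 𝔈 → ℝ)
    (hX0 : ∀ x, 0 ≤ pX x) (hW0 : ∀ x, 0 ≤ pW x)
    (hXd : ContDiff ℝ 1 pX) (hWc : Continuous pW)
    (hXi : Integrable pX) (hWi : Integrable pW)
    (y : 𝔈) (ε : ℝ) (hε : 0 < ε) (g : 𝔈 → ℝ) (hg : Integrable g)
    (hb : ∀ y', dist y' y < ε → ∀ x, ‖gradient pX x‖ * pW (y' - x) ≤ g x) :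
    Integrable fun x => pX x * pW (y - x) := by
  have hXc : Continuous pX := hXd.continuous
  have hGc : Continuous (gradient pX) := grad_continuous pX hXd
  -- the convolution integrand is jointly continuous, hence measurable
  have hjc : Continuous fun p : 𝔈 × 𝔈 => pX p.2 * pW (p.1 - p.2) :=
    (hXc.comp continuous_snd).mul (hWc.comp (continuous_fst.sub continuous_snd))
  set J : 𝔈 → ℝ≥0∞ := fun y' => ∫⁻ x, ENNReal.ofReal (pX x * pW (y' - x)) with hJ
  have hJm : Measurable J :=
    Measurable.lintegral_prod_right (f := fun (y' x : 𝔈) => ENNReal.ofReal (pX x * pW (y' - x)))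
      (ENNReal.measurable_ofReal.comp hjc.measurable)
  have hWlint : ∫⁻ z, ENNReal.ofReal (pW z) ≠ ⊤ := by
    rw [← ofReal_integral_eq_lintegral_ofReal hWi (Filter.Eventually.of_forall hW0)]
    exact ENNReal.ofReal_ne_top
  have hXlint : ∫⁻ z, ENNReal.ofReal (pX z) ≠ ⊤ := by
    rw [← ofReal_integral_eq_lintegral_ofReal hXi (Filter.Eventually.of_forall hX0)]
    exact ENNReal.ofReal_ne_top
  have hJtot : ∫⁻ y', J y' ≠ ⊤ := by
    have swap : ∫⁻ y', J y' = ∫⁻ x, ∫⁻ y', ENNReal.ofReal (pX x * pW (y' - x)) :=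
      lintegral_lintegral_swap (ENNReal.measurable_ofReal.comp hjc.measurable).aemeasurable
    rw [swap]
    have hper : ∀ x : 𝔈, ∫⁻ y', ENNReal.ofReal (pX x * pW (y' - x))
        = ENNReal.ofReal (pX x) * ∫⁻ z, ENNReal.ofReal (pW z) := by
      intro x
      have hmW : Measurable fun y' : 𝔈 => ENNReal.ofReal (pW (y' - x)) :=
        ENNReal.measurable_ofReal.comp (hWc.comp (continuous_id.sub continuous_const)).measurable
      simp_rw [ENNReal.ofReal_mul (hX0 x)]
      rw [lintegral_const_mul _ hmW]
      congr 1
      simp_rw [sub_eq_add_neg]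
      exact lintegral_add_right_eq_self (fun z => ENNReal.ofReal (pW z)) (-x)
    simp_rw [hper]
    have hmX : Measurable fun x : 𝔈 => ENNReal.ofReal (pX x) :=
      ENNReal.measurable_ofReal.comp hXc.measurable
    rw [lintegral_mul_const _ hmX]
    exact ENNReal.mul_ne_top hXlint hWlint
  obtain ⟨y₀, hy₀ball, hy₀fin⟩ : ∃ y₀, dist y₀ y < ε ∧ J y₀ < ⊤ := by
    by_contra hcon
    push_neg at hcon
    have hae : ∀ᵐ y', J y' < ⊤ := ae_lt_top hJm hJtot
    have hsub : Metric.ball y ε ⊆ {y' | ¬ J y' < ⊤} := by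
      intro z hz
      simp only [Set.mem_setOf_eq, not_lt]
      exact hcon z (by simpa [Metric.mem_ball] using hz)
    have h0 : volume (Metric.ball y ε) = 0 :=
      measure_mono_null hsub (by simpa [ae_iff] using hae)
    exact absurd h0 (Metric.measure_ball_pos volume y hε).ne'
  set v : 𝔈 := y - y₀ with hv
  have hvε : ‖v‖ < ε := by
    rw [hv, ← dist_eq_norm, dist_comm]
    exact hy₀ball
  -- translation step
  have htrans : J y = ∫⁻ u, ENNReal.ofReal (pX (u + v) * pW (y₀ - u)) := by
    show (∫⁻ x, ENNReal.ofReal (pX x * pW (y - x))) = _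
    rw [← lintegral_add_right_eq_self (fun x => ENNReal.ofReal (pX x * pW (y - x))) v]
    apply lintegral_congr
    intro u
    have : y - (u + v) = y₀ - u := by rw [hv]; abel
    rw [this]
  set H : 𝔈 → ℝ := fun u => ∫ t in (0:ℝ)..1, ‖gradient pX (u + t • v)‖ with hH
  have hH0 : ∀ u, 0 ≤ H u := fun u =>
    intervalIntegral.integral_nonneg zero_le_one (fun t _ => norm_nonneg _)
  set K : 𝔈 → ℝ≥0∞ := fun u => ∫⁻ t in Set.Ioc (0:ℝ) 1, ENNReal.ofReal ‖gradient pX (u + t • v)‖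
    with hK
  have hKjm : Measurable fun p : 𝔈 × ℝ => ENNReal.ofReal ‖gradient pX (p.1 + p.2 • v)‖ := by
    apply ENNReal.measurable_ofReal.comp
    exact ((hGc.comp (continuous_fst.add (continuous_snd.smul continuous_const))).norm).measurable
  have hKm : Measurable K :=
    Measurable.lintegral_prod_right (f := fun (u : 𝔈) (t : ℝ) =>
      ENNReal.ofReal ‖gradient pX (u + t • v)‖) hKjm
  have hHK : ∀ u, ENNReal.ofReal (H u) = K u := by
    intro u
    show ENNReal.ofReal (∫ t in (0:ℝ)..1, ‖gradient pX (u + t • v)‖)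
      = ∫⁻ t in Set.Ioc (0:ℝ) 1, ENNReal.ofReal ‖gradient pX (u + t • v)‖
    rw [intervalIntegral.integral_of_le zero_le_one]
    exact ofReal_integral_eq_lintegral_ofReal
      ((hGc.comp (by continuity)).norm.integrableOn_Ioc)
      (Filter.Eventually.of_forall fun t => norm_nonneg _)
  -- pointwise bound
  have hpt : ∀ u, ENNReal.ofReal (pX (u + v) * pW (y₀ - u))
      ≤ ENNReal.ofReal (pX u * pW (y₀ - u))
        + ENNReal.ofReal ‖v‖ * K u * ENNReal.ofReal (pW (y₀ - u)) := by
    intro u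
    have h1 : pX (u + v) * pW (y₀ - u)
        ≤ pX u * pW (y₀ - u) + (‖v‖ * H u) * pW (y₀ - u) := by
      have := line_bound pX hXd u v
      nlinarith [hW0 (y₀ - u), this]
    calc ENNReal.ofReal (pX (u + v) * pW (y₀ - u))
        ≤ ENNReal.ofReal (pX u * pW (y₀ - u) + (‖v‖ * H u) * pW (y₀ - u)) :=
          ENNReal.ofReal_le_ofReal h1
      _ ≤ ENNReal.ofReal (pX u * pW (y₀ - u))
            + ENNReal.ofReal ((‖v‖ * H u) * pW (y₀ - u)) := ENNReal.ofReal_add_le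
      _ = ENNReal.ofReal (pX u * pW (y₀ - u))
            + ENNReal.ofReal ‖v‖ * K u * ENNReal.ofReal (pW (y₀ - u)) := by
          rw [ENNReal.ofReal_mul (mul_nonneg (norm_nonneg v) (hH0 u)),
            ENNReal.ofReal_mul (norm_nonneg v), hHK u]
  set Glint : ℝ≥0∞ := ∫⁻ w, ENNReal.ofReal (g w) with hGlint
  have hGfin : Glint ≠ ⊤ := by
    have h1 : Glint ≤ ∫⁻ w, ENNReal.ofReal |g w| :=
      lintegral_mono fun w => ENNReal.ofReal_le_ofReal (le_abs_self _)
    rw [← ofReal_integral_eq_lintegral_ofReal hg.abs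
      (Filter.Eventually.of_forall fun w => abs_nonneg _)] at h1
    exact ne_top_of_le_ne_top ENNReal.ofReal_ne_top h1
  -- the main bound: ∫⁻ u, K u * ofReal (pW (y₀ - u)) ≤ Glint
  have hT : ∫⁻ u, K u * ENNReal.ofReal (pW (y₀ - u)) ≤ Glint := by
    have step1 : ∫⁻ u, K u * ENNReal.ofReal (pW (y₀ - u))
        = ∫⁻ u, ∫⁻ t in Set.Ioc (0:ℝ) 1,
            ENNReal.ofReal ‖gradient pX (u + t • v)‖ * ENNReal.ofReal (pW (y₀ - u)) := by
      apply lintegral_congr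
      intro u
      have hmt : Measurable fun t : ℝ => ENNReal.ofReal ‖gradient pX (u + t • v)‖ :=
        ENNReal.measurable_ofReal.comp
          ((hGc.comp (continuous_const.add (continuous_id.smul continuous_const))).norm).measurable
      exact (lintegral_mul_const _ hmt).symm
    have hswapm : AEMeasurable
        (Function.uncurry fun (u : 𝔈) (t : ℝ) =>
          ENNReal.ofReal ‖gradient pX (u + t • v)‖ * ENNReal.ofReal (pW (y₀ - u)))
        (volume.prod (volume.restrict (Set.Ioc (0:ℝ) 1))) := by
      apply Measurable.aemeasurable
      exact hKjm.mul (ENNReal.measurable_ofReal.comp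
        (hWc.comp (continuous_const.sub continuous_fst)).measurable)
    have step2 : (∫⁻ u, ∫⁻ t in Set.Ioc (0:ℝ) 1,
            ENNReal.ofReal ‖gradient pX (u + t • v)‖ * ENNReal.ofReal (pW (y₀ - u)))
        = ∫⁻ t in Set.Ioc (0:ℝ) 1, ∫⁻ u,
            ENNReal.ofReal ‖gradient pX (u + t • v)‖ * ENNReal.ofReal (pW (y₀ - u)) :=
      lintegral_lintegral_swap hswapm
    have step3 : ∀ t ∈ Set.Ioc (0:ℝ) 1,
        (∫⁻ u, ENNReal.ofReal ‖gradient pX (u + t • v)‖ * ENNReal.ofReal (pW (y₀ - u)))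
          ≤ Glint := by
      intro t ht
      have hdist : dist (y₀ + t • v) y < ε := by
        have h1 : y₀ + t • v - y = (t - 1) • v := by
          have hyy : y₀ - y = -v := by rw [hv]; abel
          calc y₀ + t • v - y = t • v + (y₀ - y) := by abel
            _ = t • v - v := by rw [hyy]; abel
            _ = (t - 1) • v := by rw [sub_smul, one_smul]
        have habs : |t - 1| ≤ 1 := abs_le.mpr ⟨by linarith [ht.1], by linarith [ht.2]⟩
        calc dist (y₀ + t • v) y = ‖(t - 1) • v‖ := by rw [dist_eq_norm, h1]
          _ = |t - 1| * ‖v‖ := by rw [norm_smul, Real.norm_eq_abs]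
          _ ≤ 1 * ‖v‖ := mul_le_mul_of_nonneg_right habs (norm_nonneg v)
          _ < ε := by simpa using hvε
      have htr : (∫⁻ u, ENNReal.ofReal ‖gradient pX (u + t • v)‖ * ENNReal.ofReal (pW (y₀ - u)))
          = ∫⁻ w, ENNReal.ofReal (‖gradient pX w‖ * pW ((y₀ + t • v) - w)) := by
        rw [← lintegral_add_right_eq_self
          (fun w => ENNReal.ofReal (‖gradient pX w‖ * pW ((y₀ + t • v) - w))) (t • v)]
        apply lintegral_congr
        intro u
        have harg : y₀ + t • v - (u + t • v) = y₀ - u := by abel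
        rw [harg, ENNReal.ofReal_mul (norm_nonneg _)]
      rw [htr]
      exact lintegral_mono fun w => ENNReal.ofReal_le_ofReal (hb (y₀ + t • v) hdist w)
    calc ∫⁻ u, K u * ENNReal.ofReal (pW (y₀ - u))
        = ∫⁻ t in Set.Ioc (0:ℝ) 1, ∫⁻ u,
            ENNReal.ofReal ‖gradient pX (u + t • v)‖ * ENNReal.ofReal (pW (y₀ - u)) := by
          rw [step1, step2]
      _ ≤ ∫⁻ _t in Set.Ioc (0:ℝ) 1, Glint := by
          apply lintegral_mono_ae
          rw [ae_restrict_iff' measurableSet_Ioc]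
          exact Filter.Eventually.of_forall step3
      _ = Glint := by
          rw [setLIntegral_const, Real.volume_Ioc]
          simp
  -- put the pieces together
  have hmeas1 : Measurable fun u : 𝔈 => ENNReal.ofReal (pX u * pW (y₀ - u)) :=
    ENNReal.measurable_ofReal.comp
      ((hXc.mul (hWc.comp (continuous_const.sub continuous_id))).measurable)
  have hmeas2 : Measurable fun u : 𝔈 => K u * ENNReal.ofReal (pW (y₀ - u)) :=
    hKm.mul (ENNReal.measurable_ofReal.comp
      (hWc.comp (continuous_const.sub continuous_id)).measurable)
  have hJyfin : J y < ⊤ := by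
    calc J y = ∫⁻ u, ENNReal.ofReal (pX (u + v) * pW (y₀ - u)) := htrans
      _ ≤ ∫⁻ u, (ENNReal.ofReal (pX u * pW (y₀ - u))
            + ENNReal.ofReal ‖v‖ * K u * ENNReal.ofReal (pW (y₀ - u))) := lintegral_mono hpt
      _ = J y₀ + ∫⁻ u, ENNReal.ofReal ‖v‖ * (K u * ENNReal.ofReal (pW (y₀ - u))) := by
          simp_rw [mul_assoc]
          rw [lintegral_add_left hmeas1]
      _ = J y₀ + ENNReal.ofReal ‖v‖ * ∫⁻ u, K u * ENNReal.ofReal (pW (y₀ - u)) := by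
          rw [lintegral_const_mul _ hmeas2]
      _ ≤ J y₀ + ENNReal.ofReal ‖v‖ * Glint := by
          exact add_le_add_right (mul_le_mul_right hT _) _
      _ < ⊤ := by
          apply ENNReal.add_lt_top.mpr
          exact ⟨hy₀fin, ENNReal.mul_lt_top ENNReal.ofReal_lt_top hGfin.lt_top⟩
  constructor
  · exact (hXc.mul (hWc.comp (continuous_const.sub continuous_id))).aestronglyMeasurable
  · rw [hasFiniteIntegral_iff_ofReal
      (Filter.Eventually.of_forall fun x => mul_nonneg (hX0 x) (hW0 _))]
    exact hJyfin

lemma pY_hasGradient (pX pW : 𝔈 → ℝ)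
    (hX0 : ∀ x, 0 ≤ pX x) (hW0 : ∀ x, 0 ≤ pW x)
    (hXd : ContDiff ℝ 1 pX) (hWc : Continuous pW)
    (hXi : Integrable pX) (hWi : Integrable pW)
    (hInt : ∀ y, Integrable fun x => ‖gradient pX x‖ * pW (y - x))
    (hDom : ∀ y : 𝔈, ∃ ε > 0, ∃ g : 𝔈 → ℝ, Integrable g ∧
      ∀ y', dist y' y < ε → ∀ x, ‖gradient pX x‖ * pW (y' - x) ≤ g x) (y : 𝔈) :
    HasGradientAt (fun y' => ∫ x, pX x * pW (y' - x))
      (∫ x, pW (y - x) • gradient pX x) y := by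
  have hXc : Continuous pX := hXd.continuous
  have hGc : Continuous (gradient pX) := grad_continuous pX hXd
  set Φ : 𝔈 → 𝔈 := fun y' => ∫ x, pW (y' - x) • gradient pX x with hΦ
  have hPint : ∀ y' : 𝔈, Integrable fun x => pW (y' - x) • gradient pX x := by
    intro y'
    apply (hInt y').mono'
    · exact ((hWc.comp (continuous_const.sub continuous_id)).smul hGc).aestronglyMeasurable
    · filter_upwards with x
      rw [norm_smul, Real.norm_eq_abs, abs_of_nonneg (hW0 _), mul_comm]
  have hΦc : Continuous Φ := by
    rw [continuous_iff_continuousAt]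
    intro z
    obtain ⟨ε, hε, g, hg, hbd⟩ := hDom z
    apply continuousAt_of_dominated
    · exact Filter.Eventually.of_forall fun y'' =>
        ((hWc.comp (continuous_const.sub continuous_id)).smul hGc).aestronglyMeasurable
    · filter_upwards [Metric.ball_mem_nhds z hε] with y'' hy''
      filter_upwards with x
      rw [norm_smul, Real.norm_eq_abs, abs_of_nonneg (hW0 _), mul_comm]
      exact hbd y'' (Metric.mem_ball.mp hy'') x
    · exact hg
    · filter_upwards with x
      exact ((hWc.comp (continuous_id.sub continuous_const)).smul continuous_const).continuousAt
  have hconv : ∀ y' : 𝔈, Integrable fun x => pX x * pW (y' - x) := by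
    intro y'
    obtain ⟨ε, hε, g, hg, hbd⟩ := hDom y'
    exact conv_integrable pX pW hX0 hW0 hXd hWc hXi hWi y' ε hε g hg hbd
  obtain ⟨ε, hε, g, hg, hbd⟩ := hDom y
  -- the key finite-increment identity
  have hkey : ∀ h : 𝔈, ‖h‖ < ε →
      (∫ x, pX x * pW (y + h - x)) - (∫ x, pX x * pW (y - x))
        = ∫ t in (0:ℝ)..1, (inner ℝ (Φ (y + t • h)) h : ℝ) := by
    intro h hh
    have harg : ∀ (z : 𝔈) (x : 𝔈), z + h - (x + h) = z - x := fun z x => by abel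
    have htrans1 : (∫ x, pX x * pW (y + h - x)) = ∫ x, pX (x + h) * pW (y - x) := by
      rw [← integral_add_right_eq_self (fun x => pX x * pW (y + h - x)) h]
      simp_rw [harg y]
    have hXh : Integrable fun x => pX (x + h) * pW (y - x) := by
      have h2 := (hconv (y + h)).comp_add_right h
      simpa [harg y] using h2
    have hsub : (∫ x, pX x * pW (y + h - x)) - (∫ x, pX x * pW (y - x))
        = ∫ x, (pX (x + h) - pX x) * pW (y - x) := by
      rw [htrans1, ← integral_sub hXh (hconv y)]
      simp_rw [sub_mul]
    rw [hsub]
    have hftc : ∀ x : 𝔈, (pX (x + h) - pX x) * pW (y - x)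
        = ∫ t in Set.Ioc (0:ℝ) 1, (inner ℝ (gradient pX (x + t • h)) h : ℝ) * pW (y - x) := by
      intro x
      rw [show pX (x + h) - pX x = _ from ftc_line pX hXd x h,
        ← intervalIntegral.integral_mul_const, intervalIntegral.integral_of_le zero_le_one]
    simp_rw [hftc]
    -- Fubini
    have hjc2 : Continuous (Function.uncurry fun (t : ℝ) (x : 𝔈) =>
        (inner ℝ (gradient pX (x + t • h)) h : ℝ) * pW (y - x)) := by
      apply Continuous.mul
      · exact ((hGc.comp (continuous_snd.add (continuous_fst.smul continuous_const))).inner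
          continuous_const)
      · exact hWc.comp (continuous_const.sub continuous_snd)
    have hprodm : AEStronglyMeasurable (Function.uncurry fun (t : ℝ) (x : 𝔈) =>
        (inner ℝ (gradient pX (x + t • h)) h : ℝ) * pW (y - x))
        ((volume.restrict (Set.Ioc (0:ℝ) 1)).prod volume) := hjc2.aestronglyMeasurable
    have hargt : ∀ (t : ℝ) (x : 𝔈), y + t • h - (x + t • h) = y - x := fun t x => by abel
    have hslice : ∀ t : ℝ, Integrable fun x =>
        (inner ℝ (gradient pX (x + t • h)) h : ℝ) * pW (y - x) := by
      intro t
      have h1 : Integrable fun x => ‖gradient pX (x + t • h)‖ * pW (y - x) := by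
        have h2 := (hInt (y + t • h)).comp_add_right (t • h)
        simpa [hargt t] using h2
      apply (h1.mul_const ‖h‖).mono'
      · exact (((hGc.comp (continuous_id.add continuous_const)).inner continuous_const).mul
          (hWc.comp (continuous_const.sub continuous_id))).aestronglyMeasurable
      · filter_upwards with x
        rw [norm_mul, Real.norm_eq_abs, Real.norm_eq_abs, abs_of_nonneg (hW0 _)]
        calc |(inner ℝ (gradient pX (x + t • h)) h : ℝ)| * pW (y - x)
            ≤ ‖gradient pX (x + t • h)‖ * ‖h‖ * pW (y - x) :=
              mul_le_mul_of_nonneg_right (abs_real_inner_le_norm _ _) (hW0 _)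
          _ = ‖gradient pX (x + t • h)‖ * pW (y - x) * ‖h‖ := by ring
    have hdistt : ∀ t : ℝ, t ∈ Set.Ioc (0:ℝ) 1 → dist (y + t • h) y < ε := by
      intro t ht
      have : dist (y + t • h) y = |t| * ‖h‖ := by
        rw [dist_eq_norm, add_sub_cancel_left, norm_smul, Real.norm_eq_abs]
      rw [this, abs_of_pos ht.1]
      calc t * ‖h‖ ≤ 1 * ‖h‖ := mul_le_mul_of_nonneg_right ht.2 (norm_nonneg h)
        _ < ε := by simpa using hh
    have hnormint : Integrable
        (fun t => ∫ x, ‖(inner ℝ (gradient pX (x + t • h)) h : ℝ) * pW (y - x)‖)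
        (volume.restrict (Set.Ioc (0:ℝ) 1)) := by
      apply Integrable.mono' (g := fun _ => ‖h‖ * ∫ w, g w)
      · exact integrableOn_const measure_Ioc_lt_top.ne
      · exact hprodm.norm.integral_prod_right'
      · rw [ae_restrict_iff' measurableSet_Ioc]
        filter_upwards with t ht
        have hgt : Integrable fun x : 𝔈 => ‖h‖ * g (x + t • h) :=
          (hg.comp_add_right (t • h)).const_mul ‖h‖
        have hbnd : ∀ x : 𝔈, ‖(inner ℝ (gradient pX (x + t • h)) h : ℝ) * pW (y - x)‖
            ≤ ‖h‖ * g (x + t • h) := by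
          intro x
          rw [norm_mul, Real.norm_eq_abs, Real.norm_eq_abs, abs_of_nonneg (hW0 _)]
          calc |(inner ℝ (gradient pX (x + t • h)) h : ℝ)| * pW (y - x)
              ≤ ‖gradient pX (x + t • h)‖ * ‖h‖ * pW (y - x) :=
                mul_le_mul_of_nonneg_right (abs_real_inner_le_norm _ _) (hW0 _)
            _ = ‖h‖ * (‖gradient pX (x + t • h)‖ * pW ((y + t • h) - (x + t • h))) := by
                rw [hargt t]; ring
            _ ≤ ‖h‖ * g (x + t • h) := by
                exact mul_le_mul_of_nonneg_left (hbd (y + t • h) (hdistt t ht) (x + t • h))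
                  (norm_nonneg h)
        have hint2 : ∫ w, g w = ∫ x, g (x + t • h) :=
          (integral_add_right_eq_self g (t • h)).symm
        rw [Real.norm_of_nonneg (integral_nonneg fun x => norm_nonneg _)]
        calc (∫ x, ‖(inner ℝ (gradient pX (x + t • h)) h : ℝ) * pW (y - x)‖)
            ≤ ∫ x, ‖h‖ * g (x + t • h) :=
              integral_mono_of_nonneg (Filter.Eventually.of_forall fun x => norm_nonneg _)
                hgt (Filter.Eventually.of_forall hbnd)
          _ = ‖h‖ * ∫ w, g w := by
              rw [MeasureTheory.integral_const_mul, hint2]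
    have hfub : Integrable (Function.uncurry fun (t : ℝ) (x : 𝔈) =>
        (inner ℝ (gradient pX (x + t • h)) h : ℝ) * pW (y - x))
        ((volume.restrict (Set.Ioc (0:ℝ) 1)).prod volume) :=
      (integrable_prod_iff hprodm).mpr
        ⟨Filter.Eventually.of_forall fun t => hslice t, hnormint⟩
    rw [← integral_integral_swap hfub]
    rw [intervalIntegral.integral_of_le zero_le_one]
    apply integral_congr_ae
    filter_upwards with t
    have htr : (∫ x, (inner ℝ (gradient pX (x + t • h)) h : ℝ) * pW (y - x))
        = ∫ u, (inner ℝ (gradient pX u) h : ℝ) * pW ((y + t • h) - u) := by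
      rw [← integral_add_right_eq_self
        (fun u => (inner ℝ (gradient pX u) h : ℝ) * pW ((y + t • h) - u)) (t • h)]
      simp_rw [hargt t]
    rw [htr]
    have hsmul : ∀ u : 𝔈, (inner ℝ (gradient pX u) h : ℝ) * pW ((y + t • h) - u)
        = (inner ℝ h (pW ((y + t • h) - u) • gradient pX u) : ℝ) := by
      intro u
      rw [real_inner_smul_right, real_inner_comm]
      ring
    simp_rw [hsmul]
    rw [integral_inner (hPint (y + t • h)), real_inner_comm]
  -- conclude via little-o
  show HasFDerivAt _ (InnerProductSpace.toDual ℝ 𝔈 (Φ y)) y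
  rw [hasFDerivAt_iff_isLittleO_nhds_zero, Asymptotics.isLittleO_iff]
  intro c hc
  obtain ⟨δ₁, hδ₁, hΦδ⟩ : ∃ δ₁ > 0, ∀ y'' : 𝔈, dist y'' y < δ₁ → ‖Φ y'' - Φ y‖ ≤ c := by
    obtain ⟨δ₁, hδ₁, hd⟩ := Metric.continuousAt_iff.mp hΦc.continuousAt c hc
    exact ⟨δ₁, hδ₁, fun y'' hy'' => by
      rw [← dist_eq_norm]
      exact (hd hy'').le⟩
  have hδ : (0:ℝ) < min ε δ₁ := lt_min hε hδ₁
  filter_upwards [Metric.ball_mem_nhds (0 : 𝔈) hδ] with h hh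
  rw [mem_ball_zero_iff] at hh
  have hhε : ‖h‖ < ε := lt_of_lt_of_le hh (min_le_left _ _)
  have hhδ₁ : ‖h‖ < δ₁ := lt_of_lt_of_le hh (min_le_right _ _)
  have hk := hkey h hhε
  have hconst : (inner ℝ (Φ y) h : ℝ) = ∫ t in (0:ℝ)..1, (inner ℝ (Φ y) h : ℝ) := by simp
  have hii1 : IntervalIntegrable (fun t : ℝ => (inner ℝ (Φ (y + t • h)) h : ℝ)) volume 0 1 := by
    apply Continuous.intervalIntegrable
    exact (hΦc.comp (continuous_const.add (continuous_id.smul continuous_const))).inner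
      continuous_const
  have hdiff : (∫ x, pX x * pW (y + h - x)) - (∫ x, pX x * pW (y - x))
      - (inner ℝ (Φ y) h : ℝ)
      = ∫ t in (0:ℝ)..1, (inner ℝ (Φ (y + t • h) - Φ y) h : ℝ) := by
    rw [hk, hconst, ← intervalIntegral.integral_sub hii1 (by simp)]
    simp_rw [inner_sub_left]
  have hbound : ∀ t ∈ Set.uIoc (0:ℝ) 1, ‖(inner ℝ (Φ (y + t • h) - Φ y) h : ℝ)‖ ≤ c * ‖h‖ := by
    intro t ht
    rw [Set.uIoc_of_le zero_le_one] at ht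
    have hdt : dist (y + t • h) y < δ₁ := by
      have : dist (y + t • h) y = |t| * ‖h‖ := by
        rw [dist_eq_norm, add_sub_cancel_left, norm_smul, Real.norm_eq_abs]
      rw [this, abs_of_pos ht.1]
      calc t * ‖h‖ ≤ 1 * ‖h‖ := mul_le_mul_of_nonneg_right ht.2 (norm_nonneg h)
        _ < δ₁ := by simpa using hhδ₁
    calc ‖(inner ℝ (Φ (y + t • h) - Φ y) h : ℝ)‖
        ≤ ‖Φ (y + t • h) - Φ y‖ * ‖h‖ := norm_inner_le_norm _ _
      _ ≤ c * ‖h‖ := mul_le_mul_of_nonneg_right (hΦδ _ hdt) (norm_nonneg h)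
  calc ‖(∫ x, pX x * pW (y + h - x)) - (∫ x, pX x * pW (y - x))
        - InnerProductSpace.toDual ℝ 𝔈 (Φ y) h‖
      = ‖∫ t in (0:ℝ)..1, (inner ℝ (Φ (y + t • h) - Φ y) h : ℝ)‖ := by
        rw [InnerProductSpace.toDual_apply_apply, hdiff]
    _ ≤ c * ‖h‖ * |1 - 0| := intervalIntegral.norm_integral_le_of_norm_le_const hbound
    _ = c * ‖h‖ := by simp

end TargetScoreAux

open TargetScoreAux in
/-- **Target Score Identity** (additive noise model `Y = X + W`):
for every `y`, `∇ log p_Y(y) = ∫ ∇ log p_X(x) p_{X|Y}(x|y) dx`. -/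
theorem target_score_identity
    (d : ℕ) (hd : 1 ≤ d)
    (pX pW : EuclideanSpace ℝ (Fin d) → ℝ)
    (hpX_pos : ∀ x, 0 < pX x) (hpW_pos : ∀ w, 0 < pW w)
    (hpX_diff : ContDiff ℝ 1 pX) (hpW_diff : ContDiff ℝ 1 pW)
    (hpX_prob : ∫ x, pX x = 1) (hpW_prob : ∫ w, pW w = 1)
    (pY : EuclideanSpace ℝ (Fin d) → ℝ)
    (hpY : ∀ y, pY y = ∫ x, pX x * pW (y - x))
    (pXgY : EuclideanSpace ℝ (Fin d) → EuclideanSpace ℝ (Fin d) → ℝ)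
    (hpXgY : ∀ x y, pXgY x y = pX x * pW (y - x) / pY y)
    (hInt : ∀ y, Integrable (fun x => ‖gradient pX x‖ * pW (y - x)))
    (hDom : ∀ y, ∃ ε > 0, ∃ g : EuclideanSpace ℝ (Fin d) → ℝ, Integrable g ∧
      ∀ y', dist y' y < ε → ∀ x, ‖gradient pX x‖ * pW (y' - x) ≤ g x) :
    ∀ y, gradient (fun y' => Real.log (pY y')) y
      = ∫ x, pXgY x y • gradient (fun x' => Real.log (pX x')) x := by
  intro y
  have hWc : Continuous pW := hpW_diff.continuous
  have hXi : Integrable pX := integrable_of_integral_one pX hpX_prob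
  have hWi : Integrable pW := integrable_of_integral_one pW hpW_prob
  have hX0 : ∀ x, 0 ≤ pX x := fun x => (hpX_pos x).le
  have hW0 : ∀ x, 0 ≤ pW x := fun x => (hpW_pos x).le
  have hconv : Integrable fun x => pX x * pW (y - x) := by
    obtain ⟨ε, hε, g, hg, hbd⟩ := hDom y
    exact conv_integrable pX pW hX0 hW0 hpX_diff hWc hXi hWi y ε hε g hg hbd
  have hpYpos : 0 < pY y := by
    rw [hpY y]
    rw [integral_pos_iff_support_of_nonneg (fun x => mul_nonneg (hX0 x) (hW0 _)) hconv]
    have hsupp : Function.support (fun x => pX x * pW (y - x)) = Set.univ := by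
      ext x
      simp only [Function.mem_support, Set.mem_univ, iff_true]
      exact (mul_pos (hpX_pos x) (hpW_pos (y - x))).ne'
    rw [hsupp]
    simpa using Measure.measure_univ_pos.mpr (NeZero.ne _)
  have hpYfun : pY = fun y' => ∫ x, pX x * pW (y' - x) := funext hpY
  have hgradY : HasGradientAt pY (∫ x, pW (y - x) • gradient pX x) y := by
    rw [hpYfun]
    exact pY_hasGradient pX pW hX0 hW0 hpX_diff hWc hXi hWi hInt hDom y
  set Φy : EuclideanSpace ℝ (Fin d) := ∫ x, pW (y - x) • gradient pX x with hΦy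
  have hlog : HasGradientAt (fun y' => Real.log (pY y')) ((pY y)⁻¹ • Φy) y := by
    have hl : HasDerivAt Real.log (pY y)⁻¹ (pY y) := Real.hasDerivAt_log hpYpos.ne'
    have hfd : HasFDerivAt pY (InnerProductSpace.toDual ℝ _ Φy) y := hgradY
    have h2 := hl.comp_hasFDerivAt y hfd
    show HasFDerivAt _ (InnerProductSpace.toDual ℝ _ ((pY y)⁻¹ • Φy)) y
    rw [_root_.map_smul]
    exact h2
  rw [hlog.gradient]
  have hgradlogX : ∀ x, gradient (fun x' => Real.log (pX x')) x
      = (pX x)⁻¹ • gradient pX x := by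
    intro x
    have hl : HasDerivAt Real.log (pX x)⁻¹ (pX x) := Real.hasDerivAt_log (hpX_pos x).ne'
    have hfd : HasFDerivAt pX (InnerProductSpace.toDual ℝ _ (gradient pX x)) x :=
      ((hpX_diff.differentiable one_ne_zero) x).hasGradientAt
    have h2 := hl.comp_hasFDerivAt x hfd
    have h3 : HasGradientAt (fun x' => Real.log (pX x')) ((pX x)⁻¹ • gradient pX x) x := by
      show HasFDerivAt _ (InnerProductSpace.toDual ℝ _ ((pX x)⁻¹ • gradient pX x)) x
      rw [_root_.map_smul]; exact h2
    exact h3.gradient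
  have hpt : ∀ x, pXgY x y • gradient (fun x' => Real.log (pX x')) x
      = (pY y)⁻¹ • (pW (y - x) • gradient pX x) := by
    intro x
    rw [hgradlogX x, hpXgY x y, smul_smul, smul_smul]
    congr 1
    have hx : pX x ≠ 0 := (hpX_pos x).ne'
    have hy' : pY y ≠ 0 := hpYpos.ne'
    field_simp
  simp_rw [hpt]
  rw [integral_smul]
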